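/- Let h > 0, ε > 0, and let M : [−h, 0] → S^{2n} be piecewise continuous, partitioned into n × n blocks M = [[M₁₁, M₁₂], [M₂₁, M₂₂]]. Suppose that for every continuous function y : [−h, 0] → ℝⁿ one has ∫_{−h}^{0} [y(0); y(t)]ᵀ M(t) [y(0); y(t)] dt ≥ ε ∫_{−h}^{0} ‖y(t)‖² dt. Then M₂₂(t) ⪰ ε I at every point t ∈ (−h, 0) at which M is continuous. -/

import Mathlib

open Matrix

/-- A real-valued function on `[-h,0]` is piecewise continuous if there are finitely many
points `-h < t₁ < ⋯ < t_m < 0` such that it is bounded on `[-h,0]`, continuous (within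
`[-h,0]`) off these points, and has finite one-sided limits at each of them. -/
def PiecewiseCts (h : ℝ) (f : ℝ → ℝ) : Prop :=
  ∃ P : Finset ℝ, (↑P : Set ℝ) ⊆ Set.Ioo (-h) 0 ∧
    Bornology.IsBounded (f '' Set.Icc (-h) 0) ∧
    (∀ t ∈ Set.Icc (-h) 0 \ (↑P : Set ℝ), ContinuousWithinAt f (Set.Icc (-h) 0) t) ∧
    ∀ p ∈ P, (∃ L : ℝ, Filter.Tendsto f (nhdsWithin p (Set.Iio p)) (nhds L)) ∧
      (∃ L : ℝ, Filter.Tendsto f (nhdsWithin p (Set.Ioi p)) (nhds L))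

/-- The lower-right `n × n` block `M₂₂` of a matrix in `S^{2n}`. -/
def blk22 (n : ℕ) (M : Matrix (Fin (n + n)) (Fin (n + n)) ℝ) :
    Matrix (Fin n) (Fin n) ℝ :=
  Matrix.of fun i j => M (Fin.natAdd n i) (Fin.natAdd n j)

lemma append_zero_dot (n : ℕ) (w : Fin n → ℝ) (A : Matrix (Fin (n + n)) (Fin (n + n)) ℝ) :
    Fin.append (0 : Fin n → ℝ) w ⬝ᵥ A.mulVec (Fin.append (0 : Fin n → ℝ) w)
      = w ⬝ᵥ (blk22 n A).mulVec w := by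
  have haux : ∀ i : Fin n, Fin.append (0 : Fin n → ℝ) w (Fin.addNat i n) = w i := by
    intro i
    rw [← Fin.natAdd_eq_addNat]
    exact Fin.append_right _ _ _
  simp [dotProduct, Matrix.mulVec, blk22, Fin.sum_univ_add, Fin.append_left,
    Fin.append_right, haux]

/-- Let `h, ε > 0` and let `M : [-h,0] → S^{2n}` be piecewise continuous.
If `∫_{-h}^0 [y(0); y(t)]ᵀ M(t) [y(0); y(t)] dt ≥ ε ∫_{-h}^0 ‖y(t)‖² dt` for every
continuous `y : [-h,0] → ℝⁿ`, then `M₂₂(t) ⪰ ε I` at every point `t ∈ (-h,0)` at which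
`M` is continuous. -/
theorem statement5 (n : ℕ) (h ε : ℝ) (hh : 0 < h) (hε : 0 < ε)
    (M : ℝ → Matrix (Fin (n + n)) (Fin (n + n)) ℝ)
    (hMsymm : ∀ t ∈ Set.Icc (-h) 0, (M t).IsSymm)
    (hMpc : ∀ i j, PiecewiseCts h fun t => M t i j)
    (hyp : ∀ y : ℝ → Fin n → ℝ, ContinuousOn y (Set.Icc (-h) 0) →
      ε * (∫ t in (-h)..0, ∑ i, y t i ^ 2) ≤
        ∫ t in (-h)..0,
          Fin.append (y 0) (y t) ⬝ᵥ (M t).mulVec (Fin.append (y 0) (y t))) :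
    ∀ t ∈ Set.Ioo (-h) 0,
      (∀ i j, ContinuousWithinAt (fun s => M s i j) (Set.Icc (-h) 0) t) →
      (blk22 n (M t) - ε • (1 : Matrix (Fin n) (Fin n) ℝ)).PosSemidef := by
  intro t₀ ht₀ hcont
  have ht₀' : t₀ ∈ Set.Icc (-h) 0 := Set.Ioo_subset_Icc_self ht₀
  -- main quadratic-form inequality
  have key : ∀ v : Fin n → ℝ, ε * (∑ i, v i ^ 2) ≤ v ⬝ᵥ (blk22 n (M t₀)).mulVec v := by
    intro v
    set S : ℝ := ∑ i, v i ^ 2 with hS_def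
    have hS_nonneg : 0 ≤ S := Finset.sum_nonneg fun i _ => sq_nonneg _
    -- the quadratic form as a scalar function of time
    set g : ℝ → ℝ := fun t => ∑ i, v i * (∑ j, M t (Fin.natAdd n i) (Fin.natAdd n j) * v j)
      with hg_def
    have hg_eq : ∀ A : Matrix (Fin (n + n)) (Fin (n + n)) ℝ,
        v ⬝ᵥ (blk22 n A).mulVec v
          = ∑ i, v i * (∑ j, A (Fin.natAdd n i) (Fin.natAdd n j) * v j) := by
      intro A
      simp [dotProduct, Matrix.mulVec, blk22]
    by_contra hcon
    push_neg at hcon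
    rw [hg_eq] at hcon
    -- v ≠ 0, i.e. S > 0
    have hS_pos : 0 < S := by
      rcases hS_nonneg.lt_or_eq with hlt | heq
      · exact hlt
      · exfalso
        have hv : ∀ i, v i = 0 := by
          intro i
          have := (Finset.sum_eq_zero_iff_of_nonneg
            (fun j (_ : j ∈ Finset.univ) => sq_nonneg (v j))).1 heq.symm i (Finset.mem_univ i)
          exact pow_eq_zero_iff (two_ne_zero) |>.1 this
        rw [← heq] at hcon
        simp [hv] at hcon
    -- continuity of g at t₀ within Icc
    have hg_cont : ContinuousWithinAt g (Set.Icc (-h) 0) t₀ := by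
      apply tendsto_finset_sum
      intro i _
      apply Filter.Tendsto.const_mul
      apply tendsto_finset_sum
      intro j _
      exact (hcont _ _).mul_const _
    set K : ℝ := (g t₀ + ε * S) / 2 with hK_def
    have hK1 : g t₀ < K := by rw [hK_def]; linarith
    have hK2 : K < ε * S := by rw [hK_def]; linarith
    -- find δ₀ from continuity
    have hev : ∀ᶠ s in nhdsWithin t₀ (Set.Icc (-h) 0), g s < K :=
      hg_cont (Iio_mem_nhds hK1)
    rw [eventually_nhdsWithin_iff, Metric.eventually_nhds_iff] at hev
    obtain ⟨δ₀, hδ₀, hδ₀prop⟩ := hev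
    -- choose δ
    set δ : ℝ := min δ₀ (min (t₀ + h) (-t₀)) with hδ_def
    have hδpos : 0 < δ := by
      apply lt_min hδ₀
      apply lt_min <;> [linarith [ht₀.1]; linarith [ht₀.2]]
    have hδ1 : δ ≤ δ₀ := min_le_left _ _
    have hδ2 : δ ≤ t₀ + h := le_trans (min_le_right _ _) (min_le_left _ _)
    have hδ3 : δ ≤ -t₀ := le_trans (min_le_right _ _) (min_le_right _ _)
    -- the bump function
    set φ : ℝ → ℝ := fun t => max 0 (δ - |t - t₀|) with hφ_def
    have hφcont : Continuous φ :=
      continuous_const.max (continuous_const.sub (continuous_id.sub continuous_const).abs)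
    have hφnn : ∀ t, 0 ≤ φ t := fun t => le_max_left _ _
    have hφ0 : φ 0 = 0 := by
      have : |(0 : ℝ) - t₀| = -t₀ := by
        rw [zero_sub, abs_of_nonneg (by linarith [ht₀.2])]
      simp only [hφ_def, this]
      exact max_eq_left (by linarith)
    have hφne : ∀ t, φ t ≠ 0 → |t - t₀| < δ := by
      intro t ht
      by_contra hge
      push_neg at hge
      exact ht (max_eq_left (by linarith))
    have hφpos : ∀ t, |t - t₀| < δ → 0 < φ t := by
      intro t ht
      exact lt_max_of_lt_right (by linarith)
    -- the test function
    set y : ℝ → Fin n → ℝ := fun t i => φ t * v i with hy_def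
    have hycont : ContinuousOn y (Set.Icc (-h) 0) :=
      (continuous_pi fun i => hφcont.mul continuous_const).continuousOn
    have hy0 : y 0 = (0 : Fin n → ℝ) := funext fun i => by simp [hy_def, hφ0]
    have hyp' := hyp y hycont
    -- rewrite the LHS integrand
    have hlhs : (fun t => ∑ i, y t i ^ 2) = fun t => φ t ^ 2 * S := by
      funext t
      simp [hy_def, hS_def, mul_pow, Finset.mul_sum]
    rw [hlhs, intervalIntegral.integral_mul_const] at hyp'
    -- rewrite the RHS integrand
    have hrhs : (fun t => Fin.append (y 0) (y t) ⬝ᵥ (M t).mulVec (Fin.append (y 0) (y t)))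
        = fun t => φ t ^ 2 * g t := by
      funext t
      rw [hy0, append_zero_dot]
      have hyt : y t = φ t • v := funext fun i => rfl
      rw [hyt, Matrix.mulVec_smul, smul_dotProduct, dotProduct_smul,
        smul_eq_mul, smul_eq_mul, hg_eq]
      rw [hg_def]
      ring
    rw [hrhs] at hyp'
    -- positivity of ∫ φ²
    have hφ2int : ∀ a b : ℝ, IntervalIntegrable (fun t => φ t ^ 2) MeasureTheory.volume a b :=
      fun a b => (hφcont.pow 2).intervalIntegrable a b
    set a : ℝ := t₀ - δ / 2 with ha_def
    set b : ℝ := t₀ + δ / 2 with hb_def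
    have hha : -h ≤ a := by rw [ha_def]; linarith
    have hab : a < b := by rw [ha_def, hb_def]; linarith
    have hb0 : b ≤ 0 := by rw [hb_def]; linarith
    have hsplit1 : (∫ t in a..b, φ t ^ 2) + (∫ t in b..(0:ℝ), φ t ^ 2)
        = ∫ t in a..(0:ℝ), φ t ^ 2 :=
      intervalIntegral.integral_add_adjacent_intervals (hφ2int a b) (hφ2int b 0)
    have hsplit2 : (∫ t in (-h)..a, φ t ^ 2) + (∫ t in a..(0:ℝ), φ t ^ 2)
        = ∫ t in (-h)..(0:ℝ), φ t ^ 2 :=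
      intervalIntegral.integral_add_adjacent_intervals (hφ2int (-h) a) (hφ2int a 0)
    have hmid : 0 < ∫ t in a..b, φ t ^ 2 := by
      apply intervalIntegral.intervalIntegral_pos_of_pos_on (hφ2int a b) _ hab
      intro x hx
      have : |x - t₀| < δ := by
        rw [abs_lt]
        constructor
        · have := hx.1; rw [ha_def] at this; linarith
        · have := hx.2; rw [hb_def] at this; linarith
      exact pow_pos (hφpos x this) 2
    have hleft : 0 ≤ ∫ t in (-h)..a, φ t ^ 2 :=
      intervalIntegral.integral_nonneg hha (fun u _ => sq_nonneg _)
    have hright : 0 ≤ ∫ t in b..(0:ℝ), φ t ^ 2 :=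
      intervalIntegral.integral_nonneg hb0 (fun u _ => sq_nonneg _)
    have hI2pos : 0 < ∫ t in (-h)..(0:ℝ), φ t ^ 2 := by
      rw [← hsplit2, ← hsplit1]; linarith
    set I2 : ℝ := ∫ t in (-h)..(0:ℝ), φ t ^ 2 with hI2_def
    -- bound the RHS integral from above
    by_cases hFi : IntervalIntegrable (fun t => φ t ^ 2 * g t) MeasureTheory.volume (-h) 0
    · have hmono : (∫ t in (-h)..(0:ℝ), φ t ^ 2 * g t) ≤ ∫ t in (-h)..(0:ℝ), φ t ^ 2 * K := by
        apply intervalIntegral.integral_mono_on (by linarith) hFi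
          (((hφcont.pow 2).mul continuous_const).intervalIntegrable _ _)
        intro x hx
        by_cases hφx : φ x = 0
        · simp [hφx]
        · have hlt : |x - t₀| < δ := hφne x hφx
          have hgx : g x < K := by
            apply hδ₀prop _ hx
            rw [Real.dist_eq]
            exact lt_of_lt_of_le hlt hδ1
          exact mul_le_mul_of_nonneg_left hgx.le (sq_nonneg _)
      rw [intervalIntegral.integral_mul_const] at hmono
      have := le_trans hyp' hmono
      nlinarith [mul_lt_mul_of_pos_left hK2 hI2pos]
    · rw [intervalIntegral.integral_undef hFi] at hyp'
      have := mul_pos hε (mul_pos hI2pos hS_pos)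
      linarith
  -- conclude PosSemidef
  rw [Matrix.posSemidef_iff_dotProduct_mulVec]
  constructor
  · -- Hermitian part
    have hsym := hMsymm t₀ ht₀'
    rw [Matrix.IsHermitian]
    ext i j
    simp only [Matrix.conjTranspose_apply, Matrix.sub_apply, Matrix.smul_apply,
      Matrix.one_apply, blk22, Matrix.of_apply, star_trivial]
    rw [hsym.apply]
    by_cases hij : i = j <;> simp [hij, eq_comm]
  · intro x
    have hx := key x
    have h1 : (blk22 n (M t₀) - ε • (1 : Matrix (Fin n) (Fin n) ℝ)).mulVec x
        = (blk22 n (M t₀)).mulVec x - ε • x := by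
      rw [Matrix.sub_mulVec, Matrix.smul_mulVec, Matrix.one_mulVec]
    rw [star_trivial, h1, dotProduct_sub, dotProduct_smul, smul_eq_mul]
    have h2 : x ⬝ᵥ x = ∑ i, x i ^ 2 := by
      simp [dotProduct, sq]
    rw [h2]
    linarith
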